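/- Let $R$ be a commutative ring and let $f$ be a unit of the Laurent polynomial ring $R[T,T^{-1}]$. Then there exists a locally constant function $n : \operatorname{Spec} R \to \mathbb{Z}$ (locally constant for the Zariski topology on the prime spectrum) such that for every prime ideal $\mathfrak{p}$ of $R$ and every ring homomorphism $\varphi : R \to K$ into a field $K$ with kernel $\mathfrak{p}$, the image of $f$ under the induced ring homomorphism $R[T,T^{-1}] \to K[T,T^{-1}]$ equals $C(c) \cdot T^{n(\mathfrak{p})}$ for some nonzero $c \in K$. -/

import Mathlib

open LaurentPolynomial

/-- The ring homomorphism `R[T,T⁻¹] →+* K[T,T⁻¹]` induced by a ring homomorphism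
`φ : R →+* K`, applying `φ` to each coefficient (so `C r ↦ C (φ r)` and `T n ↦ T n`). -/
noncomputable def LaurentPolynomial.mapRingHom {R K : Type*} [CommSemiring R] [CommSemiring K]
    (φ : R →+* K) : LaurentPolynomial R →+* LaurentPolynomial K :=
  AddMonoidAlgebra.liftNCRingHom ((C : K →+* LaurentPolynomial K).comp φ)
    { toFun := fun n => T (Multiplicative.toAdd n)
      map_one' := T_zero (R := K)
      map_mul' := fun m n => T_add (R := K) (Multiplicative.toAdd m) (Multiplicative.toAdd n) }
    fun _ _ => Commute.all _ _

lemma LaurentPolynomial.mapRingHom_single {R K : Type*} [CommSemiring R] [CommSemiring K]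
    (φ : R →+* K) (n : ℤ) (a : R) :
    LaurentPolynomial.mapRingHom φ (AddMonoidAlgebra.single n a) = AddMonoidAlgebra.single n (φ a) := by
  show AddMonoidAlgebra.liftNC _ _ (AddMonoidAlgebra.single n a) = _
  rw [AddMonoidAlgebra.liftNC_single, single_eq_C_mul_T]
  rfl

lemma LaurentPolynomial.mapRingHom_apply {R K : Type*} [CommSemiring R] [CommSemiring K]
    (φ : R →+* K) (f : LaurentPolynomial R) (i : ℤ) :
    (LaurentPolynomial.mapRingHom φ f).coeff i = φ (f.coeff i) := by
  induction f using AddMonoidAlgebra.induction_linear with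
  | zero => simp
  | add f g hfi hgi =>
      rw [map_add]
      show (_ + _ : LaurentPolynomial K).coeff i = _
      rw [AddMonoidAlgebra.coeff_add, Finsupp.add_apply]
      show _ = φ ((f + g : LaurentPolynomial R).coeff i)
      rw [AddMonoidAlgebra.coeff_add, Finsupp.add_apply, map_add, hfi, hgi]
  | single n a =>
      rw [LaurentPolynomial.mapRingHom_single]
      rw [AddMonoidAlgebra.coeff_single, AddMonoidAlgebra.coeff_single, Finsupp.single_apply, Finsupp.single_apply]
      split <;> simp

lemma laurent_unit_field {K : Type*} [Field K] {f : LaurentPolynomial K} (hf : IsUnit f) :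
    ∃ (c : K) (d : ℤ), c ≠ 0 ∧ f = AddMonoidAlgebra.single d c := by
  obtain ⟨g, hfg⟩ := hf.exists_right_inv
  obtain ⟨a, f', hf'⟩ := f.exists_T_pow
  obtain ⟨b, g', hg'⟩ := g.exists_T_pow
  have hmul : f' * g' = Polynomial.X ^ (a + b) := by
    apply Polynomial.toLaurent_injective
    rw [map_mul, hf', hg', Polynomial.toLaurent_X_pow]
    calc f * T a * (g * T b) = (f * g) * (T a * T b) := by ring
    _ = T (a + b) := by rw [hfg, one_mul, T_add]
  have hdvd : f' ∣ Polynomial.X ^ (a + b) := ⟨g', hmul.symm⟩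
  obtain ⟨i, _, u, hu⟩ := (dvd_prime_pow Polynomial.prime_X _).mp hdvd
  obtain ⟨r, hr, hCr⟩ := Polynomial.isUnit_iff.mp u⁻¹.isUnit
  have hf'' : f' = Polynomial.X ^ i * Polynomial.C r := by
    rw [hCr]
    have := congrArg (fun x : Polynomial K => x * (↑u⁻¹ : Polynomial K)) hu
    simpa [mul_assoc] using this
  have hfeq : f = Polynomial.toLaurent f' * T (-(a : ℤ)) := by
    have : f * T a * T (-(a : ℤ)) = f := by
      rw [mul_assoc, ← T_add]; simp
    rw [hf', this]
  refine ⟨r, (i : ℤ) - a, hr.ne_zero, ?_⟩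
  rw [hfeq, hf'', map_mul, Polynomial.toLaurent_X_pow, Polynomial.toLaurent_C,
    single_eq_C_mul_T]
  rw [mul_comm (T (i : ℤ)) (C r), mul_assoc, ← T_add]
  norm_num [sub_eq_add_neg]

theorem laurentPolynomial_unit_locally_constant_degree
    {R : Type u} [CommRing R] (f : LaurentPolynomial R) (hf : IsUnit f) :
    ∃ n : PrimeSpectrum R → ℤ, IsLocallyConstant n ∧
      ∀ (p : PrimeSpectrum R) (K : Type v) [Field K] (φ : R →+* K),
        RingHom.ker φ = p.asIdeal →
          ∃ c : K, c ≠ 0 ∧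
            LaurentPolynomial.mapRingHom φ f = C c * T (n p) := by
  have hex : ∀ p : PrimeSpectrum R, ∃ d : ℤ, ∀ i : ℤ, f.coeff i ∉ p.asIdeal ↔ i = d := by
    intro p
    haveI := p.isPrime
    let Kp := FractionRing (R ⧸ p.asIdeal)
    let φ₀ : R →+* Kp :=
      (algebraMap (R ⧸ p.asIdeal) Kp).comp (Ideal.Quotient.mk p.asIdeal)
    have hker : ∀ x : R, φ₀ x = 0 ↔ x ∈ p.asIdeal := by
      intro x
      rw [RingHom.comp_apply,
        map_eq_zero_iff _ (IsFractionRing.injective (R ⧸ p.asIdeal) Kp),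
        Ideal.Quotient.eq_zero_iff_mem]
    obtain ⟨c, d, hc, hs⟩ := laurent_unit_field (hf.map (LaurentPolynomial.mapRingHom φ₀))
    refine ⟨d, fun i => ?_⟩
    have := LaurentPolynomial.mapRingHom_apply φ₀ f i
    rw [hs, AddMonoidAlgebra.coeff_single, Finsupp.single_apply] at this
    constructor
    · intro hnot
      by_contra hne
      rw [if_neg (fun h => hne h.symm)] at this
      exact hnot ((hker _).mp this.symm)
    · intro hi
      subst hi
      rw [if_pos rfl] at this
      intro hmem
      exact hc (this ▸ (hker _).mpr hmem)
  choose n hn using hex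
  refine ⟨n, ?_, ?_⟩
  · rw [IsLocallyConstant.iff_isOpen_fiber]
    intro y
    have : n ⁻¹' {y} = (PrimeSpectrum.basicOpen (f.coeff y) : Set (PrimeSpectrum R)) := by
      ext p
      simp only [Set.mem_preimage, Set.mem_singleton_iff, SetLike.mem_coe,
        PrimeSpectrum.mem_basicOpen]
      exact ⟨fun h => (hn p y).mpr h.symm, fun h => ((hn p y).mp h).symm⟩
    rw [this]
    exact PrimeSpectrum.isOpen_basicOpen
  · intro p K _ φ hkerφ
    refine ⟨φ (f.coeff (n p)), ?_, ?_⟩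
    · intro h0
      have : f.coeff (n p) ∈ RingHom.ker φ := h0
      rw [hkerφ] at this
      exact ((hn p (n p)).mpr rfl) this
    · rw [← single_eq_C_mul_T]
      ext i
      rw [LaurentPolynomial.mapRingHom_apply, AddMonoidAlgebra.coeff_single, Finsupp.single_apply]
      by_cases hi : i = n p
      · subst hi; rw [if_pos rfl]
      · rw [if_neg (fun h => hi h.symm)]
        have : f.coeff i ∈ p.asIdeal := by
          by_contra hc
          exact hi ((hn p i).mp hc)
        rw [← hkerφ] at this
        exact this
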